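/- Layer-coherence of intersections with tall hourglasses: if H_1 is a maximal hourglass of height h_1 ≥ 4 in a graph G of maximum degree three, and H_2 is any other maximal hourglass, then for each layer i of H_1 with layer agents u_i, w_i, it holds that u_i ∈ V(H_2) if and only if w_i ∈ V(H_2). -/
import Mathlib


/-- The vertex set of an hourglass with layers `(u i, w i)`, `i < h`. -/
def hgSet {V : Type*} (h : ℕ) (u w : ℕ → V) : Set V :=
  {v | ∃ i < h, v = u i ∨ v = w i}

/-- `IsHourglass G h u w`: the vertices `u 0, w 0, …, u (h-1), w (h-1)` induce an
hourglass of height `h` in `G`: consecutive layers are completely cross-linked,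
each layer is linked horizontally, and middle-layer vertices have exactly these
three neighbours inside the hourglass (corner vertices have degree at least two
inside, which is implied). -/
def IsHourglass {V : Type*} (G : SimpleGraph V) (h : ℕ) (u w : ℕ → V) : Prop :=
  2 ≤ h ∧
  Set.InjOn u (Set.Iio h) ∧ Set.InjOn w (Set.Iio h) ∧
  (∀ i < h, ∀ j < h, u i ≠ w j) ∧
  (∀ i < h, G.Adj (u i) (w i)) ∧
  (∀ i, i + 1 < h → G.Adj (u i) (w (i + 1)) ∧ G.Adj (u (i + 1)) (w i)) ∧
  (∀ i, 1 ≤ i → i + 1 < h →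
    (∀ j < h, G.Adj (u i) (w j) → j + 1 = i ∨ j = i ∨ j = i + 1) ∧
    (∀ j < h, ¬ G.Adj (u i) (u j)) ∧
    (∀ j < h, G.Adj (w i) (u j) → j + 1 = i ∨ j = i ∨ j = i + 1) ∧
    (∀ j < h, ¬ G.Adj (w i) (w j)))

/-- A maximal hourglass: no strictly larger vertex set induces an hourglass. -/
def IsMaxHourglass {V : Type*} (G : SimpleGraph V) (h : ℕ) (u w : ℕ → V) : Prop :=
  IsHourglass G h u w ∧
    ¬ ∃ (h' : ℕ) (u' w' : ℕ → V), IsHourglass G h' u' w' ∧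
        hgSet h u w ⊂ hgSet h' u' w'

set_option linter.unusedSectionVars false
set_option maxHeartbeats 1000000

section Helpers

variable {V : Type*} [Fintype V] {G : SimpleGraph V} [DecidableRel G.Adj]
variable {h : ℕ} {u w : ℕ → V}

lemma three_nbrs (hdeg : ∀ v : V, G.degree v ≤ 3) {v a b c x : V}
    (ha : G.Adj v a) (hb : G.Adj v b) (hc : G.Adj v c)
    (hab : a ≠ b) (hac : a ≠ c) (hbc : b ≠ c) (hx : G.Adj v x) :
    x = a ∨ x = b ∨ x = c := by
  classical
  by_contra hcon
  push_neg at hcon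
  obtain ⟨hxa, hxb, hxc⟩ := hcon
  have hsub : ({x, a, b, c} : Finset V) ⊆ G.neighborFinset v := by
    intro y hy
    simp only [Finset.mem_insert, Finset.mem_singleton] at hy
    rw [SimpleGraph.mem_neighborFinset]
    rcases hy with rfl|rfl|rfl|rfl <;> assumption
  have hcard : ({x, a, b, c} : Finset V).card = 4 := by
    rw [Finset.card_insert_of_notMem (by simp [hxa, hxb, hxc]),
        Finset.card_insert_of_notMem (by simp [hab, hac]),
        Finset.card_insert_of_notMem (by simp [hbc]),
        Finset.card_singleton]
  have hle := Finset.card_le_card hsub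
  have hd := hdeg v
  rw [← SimpleGraph.card_neighborFinset_eq_degree] at hd
  omega

lemma mem_hgSet_u {j : ℕ} (hj : j < h) : u j ∈ hgSet h u w := ⟨j, hj, Or.inl rfl⟩
lemma mem_hgSet_w {j : ℕ} (hj : j < h) : w j ∈ hgSet h u w := ⟨j, hj, Or.inr rfl⟩

lemma hgSet_comm : hgSet h u w = hgSet h w u := by
  ext v
  constructor <;> rintro ⟨i, hi, e|e⟩ <;> exact ⟨i, hi, by tauto⟩

lemma hgSet_rev (h1 : 1 ≤ h) :
    hgSet h (fun k => u (h - 1 - k)) (fun k => w (h - 1 - k)) = hgSet h u w := by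
  ext v
  constructor
  · rintro ⟨i, hi, e⟩; exact ⟨h - 1 - i, by omega, e⟩
  · rintro ⟨i, hi, e⟩
    refine ⟨h - 1 - i, by omega, ?_⟩
    have hh : h - 1 - (h - 1 - i) = i := by omega
    simpa only [hh] using e

lemma u_ne (hg : IsHourglass G h u w) {i j : ℕ} (hi : i < h) (hj : j < h)
    (hij : i ≠ j) : u i ≠ u j :=
  fun e => hij (hg.2.1 (Set.mem_Iio.mpr hi) (Set.mem_Iio.mpr hj) e)

lemma w_ne (hg : IsHourglass G h u w) {i j : ℕ} (hi : i < h) (hj : j < h)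
    (hij : i ≠ j) : w i ≠ w j :=
  fun e => hij (hg.2.2.1 (Set.mem_Iio.mpr hi) (Set.mem_Iio.mpr hj) e)

lemma uw_ne (hg : IsHourglass G h u w) {i j : ℕ} (hi : i < h) (hj : j < h) :
    u i ≠ w j := hg.2.2.2.1 i hi j hj

lemma adj_lay (hg : IsHourglass G h u w) {i : ℕ} (hi : i < h) : G.Adj (u i) (w i) :=
  hg.2.2.2.2.1 i hi

lemma adj_succ (hg : IsHourglass G h u w) {i : ℕ} (hi : i + 1 < h) :
    G.Adj (u i) (w (i + 1)) := (hg.2.2.2.2.2.1 i hi).1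

lemma adj_succ' (hg : IsHourglass G h u w) {i : ℕ} (hi : i + 1 < h) :
    G.Adj (u (i + 1)) (w i) := (hg.2.2.2.2.2.1 i hi).2

lemma adj_pred (hg : IsHourglass G h u w) {i : ℕ} (h1 : 1 ≤ i) (hi : i < h) :
    G.Adj (u i) (w (i - 1)) := by
  have := adj_succ' hg (show (i - 1) + 1 < h by omega)
  rwa [show i - 1 + 1 = i from by omega] at this

lemma hg_symm (hg : IsHourglass G h u w) : IsHourglass G h w u := by
  obtain ⟨h2, hiu, hiw, huw, hlay, hcross, hmid⟩ := hg
  refine ⟨h2, hiw, hiu, fun i hi j hj => (huw j hj i hi).symm,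
    fun i hi => (hlay i hi).symm,
    fun i hi => ⟨(hcross i hi).2.symm, (hcross i hi).1.symm⟩,
    fun i hi1 hi2 => ?_⟩
  obtain ⟨m1, m2, m3, m4⟩ := hmid i hi1 hi2
  exact ⟨m3, m4, m1, m2⟩

lemma hg_rev (hg : IsHourglass G h u w) :
    IsHourglass G h (fun k => u (h - 1 - k)) (fun k => w (h - 1 - k)) := by
  obtain ⟨h2, hiu, hiw, huw, hlay, hcross, hmid⟩ := hg
  refine ⟨h2, ?_, ?_, ?_, ?_, ?_, ?_⟩
  · intro i hi j hj e
    simp only [Set.mem_Iio] at hi hj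
    have := hiu (Set.mem_Iio.mpr (show h - 1 - i < h by omega))
      (Set.mem_Iio.mpr (show h - 1 - j < h by omega)) e
    omega
  · intro i hi j hj e
    simp only [Set.mem_Iio] at hi hj
    have := hiw (Set.mem_Iio.mpr (show h - 1 - i < h by omega))
      (Set.mem_Iio.mpr (show h - 1 - j < h by omega)) e
    omega
  · intro i hi j hj; exact huw _ (by omega) _ (by omega)
  · intro i hi; exact hlay _ (by omega)
  · intro i hi
    have e : h - 1 - i = (h - 1 - (i + 1)) + 1 := by omega
    constructor
    · show G.Adj (u (h - 1 - i)) (w (h - 1 - (i + 1)))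
      rw [e]
      exact (hcross (h - 1 - (i + 1)) (by omega)).2
    · show G.Adj (u (h - 1 - (i + 1))) (w (h - 1 - i))
      rw [e]
      exact (hcross (h - 1 - (i + 1)) (by omega)).1
  · intro i hi1 hi2
    obtain ⟨m1, m2, m3, m4⟩ := hmid (h - 1 - i) (by omega) (by omega)
    refine ⟨?_, ?_, ?_, ?_⟩
    · intro j hj hadj
      have := m1 (h - 1 - j) (by omega) hadj
      omega
    · intro j hj; exact m2 (h - 1 - j) (by omega)
    · intro j hj hadj
      have := m3 (h - 1 - j) (by omega) hadj
      omega
    · intro j hj; exact m4 (h - 1 - j) (by omega)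

lemma mid_u_nbrs (hdeg : ∀ v : V, G.degree v ≤ 3) (hg : IsHourglass G h u w)
    {i : ℕ} {x : V} (h1 : 1 ≤ i) (h2 : i + 1 < h) (hx : G.Adj (u i) x) :
    x = w (i - 1) ∨ x = w i ∨ x = w (i + 1) :=
  three_nbrs hdeg (adj_pred hg h1 (by omega)) (adj_lay hg (by omega)) (adj_succ hg h2)
    (w_ne hg (by omega) (by omega) (by omega))
    (w_ne hg (by omega) (by omega) (by omega))
    (w_ne hg (by omega) (by omega) (by omega)) hx

lemma mid_w_nbrs (hdeg : ∀ v : V, G.degree v ≤ 3) (hg : IsHourglass G h u w)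
    {i : ℕ} {x : V} (h1 : 1 ≤ i) (h2 : i + 1 < h) (hx : G.Adj (w i) x) :
    x = u (i - 1) ∨ x = u i ∨ x = u (i + 1) :=
  mid_u_nbrs hdeg (hg_symm hg) h1 h2 hx

lemma final_contra {h₁ h₂ : ℕ} {u₁ w₁ u₂ w₂ : ℕ → V}
    (hg₁ : IsHourglass G h₁ u₁ w₁) (hmax₂ : IsMaxHourglass G h₂ u₂ w₂)
    (hne : hgSet h₁ u₁ w₁ ≠ hgSet h₂ u₂ w₂)
    (hsub : hgSet h₂ u₂ w₂ ⊆ hgSet h₁ u₁ w₁) : False :=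
  hmax₂.2 ⟨h₁, u₁, w₁, hg₁,
    Set.ssubset_iff_subset_ne.mpr ⟨hsub, fun e => hne e.symm⟩⟩

end Helpers

section Core

variable {V : Type*} [Fintype V] {G : SimpleGraph V} [DecidableRel G.Adj]

lemma pos0_u {h₂ : ℕ} {u₂ w₂ : ℕ → V} (hg₂ : IsHourglass G h₂ u₂ w₂) {j : ℕ} (hj : j < h₂)
    (hno3 : ∀ a b c : V, G.Adj (u₂ j) a → G.Adj (u₂ j) b → G.Adj (u₂ j) c →
      a ∈ hgSet h₂ u₂ w₂ → b ∈ hgSet h₂ u₂ w₂ → c ∈ hgSet h₂ u₂ w₂ →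
      a = b ∨ a = c ∨ b = c) :
    ∃ u' w', IsHourglass G h₂ u' w' ∧ hgSet h₂ u' w' = hgSet h₂ u₂ w₂ ∧ u₂ j = u' 0 := by
  rcases Nat.eq_zero_or_pos j with rfl | hj1
  · exact ⟨u₂, w₂, hg₂, rfl, rfl⟩
  by_cases hjtop : j + 1 = h₂
  · refine ⟨fun k => u₂ (h₂ - 1 - k), fun k => w₂ (h₂ - 1 - k), hg_rev hg₂,
      hgSet_rev (by omega), ?_⟩
    show u₂ j = u₂ (h₂ - 1 - 0)
    congr 1
    omega
  · exfalso
    have h2 : j + 1 < h₂ := by omega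
    rcases hno3 (w₂ (j - 1)) (w₂ j) (w₂ (j + 1)) (adj_pred hg₂ hj1 hj) (adj_lay hg₂ hj)
      (adj_succ hg₂ h2) (mem_hgSet_w (by omega)) (mem_hgSet_w hj) (mem_hgSet_w h2)
      with e | e | e
    · exact w_ne hg₂ (by omega) (by omega) (by omega) e
    · exact w_ne hg₂ (by omega) (by omega) (by omega) e
    · exact w_ne hg₂ (by omega) (by omega) (by omega) e

lemma pos0 {h₂ : ℕ} {u₂ w₂ : ℕ → V} (hg₂ : IsHourglass G h₂ u₂ w₂) {v : V}
    (hv : v ∈ hgSet h₂ u₂ w₂)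
    (hno3 : ∀ a b c : V, G.Adj v a → G.Adj v b → G.Adj v c →
      a ∈ hgSet h₂ u₂ w₂ → b ∈ hgSet h₂ u₂ w₂ → c ∈ hgSet h₂ u₂ w₂ →
      a = b ∨ a = c ∨ b = c) :
    ∃ u' w', IsHourglass G h₂ u' w' ∧ hgSet h₂ u' w' = hgSet h₂ u₂ w₂ ∧ v = u' 0 := by
  obtain ⟨j, hj, e | e⟩ := hv
  · subst e
    exact pos0_u hg₂ hj hno3
  · subst e
    obtain ⟨u', w', hg', heq, he⟩ := pos0_u (hg_symm hg₂) hj (by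
      intro a b c ha hb hc maB mbB mcB
      exact hno3 a b c ha hb hc (by rw [hgSet_comm]; exact maB)
        (by rw [hgSet_comm]; exact mbB) (by rw [hgSet_comm]; exact mcB))
    exact ⟨u', w', hg', by rw [heq, ← hgSet_comm], he⟩

lemma main_mid_aux (hdeg : ∀ v : V, G.degree v ≤ 3)
    {h₁ h₂ : ℕ} {u₁ w₁ u₂ w₂ : ℕ → V}
    (hg₁ : IsHourglass G h₁ u₁ w₁) (hmax₂ : IsMaxHourglass G h₂ u₂ w₂)
    (hne : hgSet h₁ u₁ w₁ ≠ hgSet h₂ u₂ w₂) (h₁4 : 4 ≤ h₁)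
    {i : ℕ} (hi1 : 1 ≤ i) (hi3 : i + 3 ≤ h₁)
    (hu : u₁ i ∈ hgSet h₂ u₂ w₂) (hw : w₁ i ∉ hgSet h₂ u₂ w₂) : False := by
  have hg₂ := hmax₂.1
  have hh₂ : 2 ≤ h₂ := hg₂.1
  have hmem : ∀ y : V, G.Adj (u₁ i) y → y ∈ hgSet h₂ u₂ w₂ →
      y = w₁ (i - 1) ∨ y = w₁ (i + 1) := by
    intro y hy hyB
    rcases mid_u_nbrs hdeg hg₁ hi1 (by omega) hy with e | e | e
    · exact Or.inl e
    · exact absurd (e ▸ hyB) hw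
    · exact Or.inr e
  obtain ⟨u', w', hg', hBeq, h0⟩ := pos0 hg₂ hu (by
    intro a b c ha hb hc haB hbB hcB
    rcases hmem a ha haB with rfl | rfl <;> rcases hmem b hb hbB with rfl | rfl <;>
      rcases hmem c hc hcB with rfl | rfl <;> tauto)
  have hB0 : w' 0 ∈ hgSet h₂ u₂ w₂ := hBeq ▸ mem_hgSet_w (by omega)
  have hB1 : w' 1 ∈ hgSet h₂ u₂ w₂ := hBeq ▸ mem_hgSet_w (by omega)
  have ha0 : G.Adj (u₁ i) (w' 0) := by rw [h0]; exact adj_lay hg' (by omega)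
  have ha1 : G.Adj (u₁ i) (w' 1) := by rw [h0]; exact adj_succ hg' (by omega)
  have hD : (w' 0 = w₁ (i - 1) ∧ w' 1 = w₁ (i + 1)) ∨
      (w' 0 = w₁ (i + 1) ∧ w' 1 = w₁ (i - 1)) := by
    have hne01 : w' 0 ≠ w' 1 := w_ne hg' (by omega) (by omega) (by omega)
    rcases hmem _ ha0 hB0 with e0 | e0 <;> rcases hmem _ ha1 hB1 with e1 | e1
    · exact absurd (e0.trans e1.symm) hne01
    · exact Or.inl ⟨e0, e1⟩
    · exact Or.inr ⟨e0, e1⟩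
    · exact absurd (e0.trans e1.symm) hne01
  have hu1a : G.Adj (u' 1) (w₁ (i - 1)) ∧ G.Adj (u' 1) (w₁ (i + 1)) := by
    have e0 : G.Adj (u' 1) (w' 0) := adj_succ' hg' (by omega)
    have e1 : G.Adj (u' 1) (w' 1) := adj_lay hg' (by omega)
    rcases hD with ⟨d0, d1⟩ | ⟨d0, d1⟩
    · exact ⟨d0 ▸ e0, d1 ▸ e1⟩
    · exact ⟨d1 ▸ e1, d0 ▸ e0⟩
  rcases Nat.lt_or_ge i 2 with hilt | hige
  · -- i = 1
    have hie : i = 1 := by omega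
    subst hie
    -- determine u' 1
    rcases mid_w_nbrs hdeg hg₁ (show 1 ≤ 2 by omega) (show 2 + 1 < h₁ by omega)
      hu1a.2.symm with e | e | e
    · -- u' 1 = u₁ 1 = u' 0
      exact u_ne hg' (by omega) (by omega) (by omega) (e.trans h0)
    · -- u' 1 = u₁ 2, but u₁ 2 not adjacent to w₁ 0
      have : G.Adj (u₁ 2) (w₁ 0) := by rw [← e]; exact hu1a.1
      rcases mid_u_nbrs hdeg hg₁ (by omega) (by omega) this with f | f | f <;>
        exact w_ne hg₁ (by omega) (by omega) (by omega) f
    · -- u' 1 = u₁ 3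
      have hadj30 : G.Adj (u₁ 3) (w₁ 0) := by rw [← e]; exact hu1a.1
      have hh14 : h₁ = 4 := by
        by_contra hc
        rcases mid_u_nbrs hdeg hg₁ (show 1 ≤ 3 by omega) (show 3 + 1 < h₁ by omega) hadj30
          with f | f | f <;> exact w_ne hg₁ (by omega) (by omega) (by omega) f
      have hN3 : ∀ x, G.Adj (u₁ 3) x → x = w₁ 0 ∨ x = w₁ 2 ∨ x = w₁ 3 := fun x hx =>
        three_nbrs hdeg hadj30 (adj_pred hg₁ (by omega) (by omega)) (adj_lay hg₁ (by omega))
          (w_ne hg₁ (by omega) (by omega) (by omega)) (w_ne hg₁ (by omega) (by omega) (by omega))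
          (w_ne hg₁ (by omega) (by omega) (by omega)) hx
      rcases Nat.lt_or_ge h₂ 3 with h2lt | h2ge
      · -- h₂ = 2
        have hh22 : h₂ = 2 := by omega
        subst hh22
        have hsub : hgSet 2 u' w' ⊆ hgSet h₁ u₁ w₁ := by
          rintro x ⟨m, hm, rfl | rfl⟩
          · interval_cases m
            · rw [← h0]; exact mem_hgSet_u (by omega)
            · rw [e]; exact mem_hgSet_u (by omega)
          · interval_cases m
            · rcases hD with ⟨d0, _⟩ | ⟨d0, _⟩ <;> rw [d0] <;> exact mem_hgSet_w (by omega)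
            · rcases hD with ⟨_, d1⟩ | ⟨_, d1⟩ <;> rw [d1] <;> exact mem_hgSet_w (by omega)
        exact final_contra hg₁ hmax₂ hne (by rw [← hBeq]; exact hsub)
      · -- h₂ ≥ 3
        have haw2 : G.Adj (u₁ 3) (w' 2) := by rw [← e]; exact adj_succ hg' (by omega)
        have hw2 : w' 2 = w₁ 3 := by
          rcases hN3 _ haw2 with f | f | f
          · exfalso
            rcases hD with ⟨d0, _⟩ | ⟨_, d1⟩
            · exact w_ne hg' (by omega) (by omega) (by omega) (f.trans d0.symm)
            · exact w_ne hg' (by omega) (by omega) (by omega) (f.trans d1.symm)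
          · exfalso
            rcases hD with ⟨_, d1⟩ | ⟨d0, _⟩
            · exact w_ne hg' (by omega) (by omega) (by omega) (f.trans d1.symm)
            · exact w_ne hg' (by omega) (by omega) (by omega) (f.trans d0.symm)
          · exact f
        have hau2 : G.Adj (u' 2) (w' 1) := adj_succ' hg' (by omega)
        rcases hD with ⟨d0, d1⟩ | ⟨d0, d1⟩
        · -- w' 0 = w₁ 0, w' 1 = w₁ 2
          have hx : G.Adj (w₁ 2) (u' 2) := by rw [← d1]; exact hau2.symm
          rcases mid_w_nbrs hdeg hg₁ (by omega) (by omega) hx with e' | e' | e'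
          · exact u_ne hg' (by omega) (by omega) (by omega) (e'.trans h0)
          · -- u' 2 = u₁ 2
            have hh23 : h₂ = 3 := by
              by_contra hc
              have haw3 : G.Adj (u₁ 2) (w' 3) := by rw [← e']; exact adj_succ hg' (by omega)
              rcases mid_u_nbrs hdeg hg₁ (by omega) (by omega) haw3 with f | f | f
              · exact hw (by rw [← f]; exact hBeq ▸ mem_hgSet_w (by omega))
              · exact w_ne hg' (by omega) (by omega) (by omega) (f.trans d1.symm)
              · exact w_ne hg' (by omega) (by omega) (by omega) (f.trans hw2.symm)
            subst hh23
            have hsub : hgSet 3 u' w' ⊆ hgSet h₁ u₁ w₁ := by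
              rintro x ⟨m, hm, rfl | rfl⟩
              · interval_cases m
                · rw [← h0]; exact mem_hgSet_u (by omega)
                · rw [e]; exact mem_hgSet_u (by omega)
                · rw [e']; exact mem_hgSet_u (by omega)
              · interval_cases m
                · rw [d0]; exact mem_hgSet_w (by omega)
                · rw [d1]; exact mem_hgSet_w (by omega)
                · rw [hw2]; exact mem_hgSet_w (by omega)
            exact final_contra hg₁ hmax₂ hne (by rw [← hBeq]; exact hsub)
          · -- u' 2 = u₁ 3 = u' 1
            exact u_ne hg' (by omega) (by omega) (by omega) (e'.trans e.symm)
        · -- w' 0 = w₁ 2, w' 1 = w₁ 0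
          have hNw0 : ∀ x, G.Adj (w₁ 0) x → x = u₁ 0 ∨ x = u₁ 1 ∨ x = u₁ 3 := fun x hx =>
            three_nbrs hdeg (adj_lay hg₁ (by omega)).symm (adj_succ' hg₁ (by omega)).symm
              hadj30.symm (u_ne hg₁ (by omega) (by omega) (by omega))
              (u_ne hg₁ (by omega) (by omega) (by omega))
              (u_ne hg₁ (by omega) (by omega) (by omega)) hx
          have hx : G.Adj (w₁ 0) (u' 2) := by rw [← d1]; exact hau2.symm
          rcases hNw0 _ hx with e' | e' | e'
          · -- u' 2 = u₁ 0
            have hadj03 : G.Adj (u₁ 0) (w₁ 3) := by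
              rw [← e', ← hw2]; exact adj_lay hg' (by omega)
            have hNu0 : ∀ x, G.Adj (u₁ 0) x → x = w₁ 0 ∨ x = w₁ 1 ∨ x = w₁ 3 := fun x hx' =>
              three_nbrs hdeg (adj_lay hg₁ (by omega)) (adj_succ hg₁ (by omega)) hadj03
                (w_ne hg₁ (by omega) (by omega) (by omega))
                (w_ne hg₁ (by omega) (by omega) (by omega))
                (w_ne hg₁ (by omega) (by omega) (by omega)) hx'
            have hh23 : h₂ = 3 := by
              by_contra hc
              have haw3 : G.Adj (u₁ 0) (w' 3) := by rw [← e']; exact adj_succ hg' (by omega)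
              rcases hNu0 _ haw3 with f | f | f
              · exact w_ne hg' (by omega) (by omega) (by omega) (f.trans d1.symm)
              · exact hw (by rw [← f]; exact hBeq ▸ mem_hgSet_w (by omega))
              · exact w_ne hg' (by omega) (by omega) (by omega) (f.trans hw2.symm)
            subst hh23
            have hsub : hgSet 3 u' w' ⊆ hgSet h₁ u₁ w₁ := by
              rintro x ⟨m, hm, rfl | rfl⟩
              · interval_cases m
                · rw [← h0]; exact mem_hgSet_u (by omega)
                · rw [e]; exact mem_hgSet_u (by omega)
                · rw [e']; exact mem_hgSet_u (by omega)
              · interval_cases m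
                · rw [d0]; exact mem_hgSet_w (by omega)
                · rw [d1]; exact mem_hgSet_w (by omega)
                · rw [hw2]; exact mem_hgSet_w (by omega)
            exact final_contra hg₁ hmax₂ hne (by rw [← hBeq]; exact hsub)
          · -- u' 2 = u₁ 1 = u' 0
            exact u_ne hg' (by omega) (by omega) (by omega) (e'.trans h0)
          · -- u' 2 = u₁ 3 = u' 1
            exact u_ne hg' (by omega) (by omega) (by omega) (e'.trans e.symm)
  · -- 2 ≤ i
    rcases mid_w_nbrs hdeg hg₁ (show 1 ≤ i - 1 by omega) (show (i - 1) + 1 < h₁ by omega)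
      hu1a.1.symm with e | e | e <;>
    rcases mid_w_nbrs hdeg hg₁ (show 1 ≤ i + 1 by omega) (show (i + 1) + 1 < h₁ by omega)
      hu1a.2.symm with f | f | f
    · exact u_ne hg₁ (by omega) (by omega) (by omega) (e.symm.trans f)
    · exact u_ne hg₁ (by omega) (by omega) (by omega) (e.symm.trans f)
    · exact u_ne hg₁ (by omega) (by omega) (by omega) (e.symm.trans f)
    · exact u_ne hg₁ (by omega) (by omega) (by omega) (e.symm.trans f)
    · exact u_ne hg₁ (by omega) (by omega) (by omega) (e.symm.trans f)
    · exact u_ne hg₁ (by omega) (by omega) (by omega) (e.symm.trans f)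
    · -- e : u' 1 = u₁ (i - 1 + 1) = u₁ i = u' 0, f : u' 1 = u₁ (i + 1 - 1)
      have e' : u' 1 = u₁ i := by rw [e]; congr 1; omega
      exact u_ne hg' (by omega) (by omega) (by omega) (e'.trans h0)
    · exact u_ne hg₁ (by omega) (by omega) (by omega) (e.symm.trans f)
    · exact u_ne hg₁ (by omega) (by omega) (by omega) (e.symm.trans f)

end Core

section Main

variable {V : Type*} [Fintype V] {G : SimpleGraph V} [DecidableRel G.Adj]

lemma main_mid (hdeg : ∀ v : V, G.degree v ≤ 3)
    {h₁ h₂ : ℕ} {u₁ w₁ u₂ w₂ : ℕ → V}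
    (hg₁ : IsHourglass G h₁ u₁ w₁) (hmax₂ : IsMaxHourglass G h₂ u₂ w₂)
    (hne : hgSet h₁ u₁ w₁ ≠ hgSet h₂ u₂ w₂) (h₁4 : 4 ≤ h₁)
    {i : ℕ} (hi1 : 1 ≤ i) (hi2 : i + 1 < h₁)
    (hu : u₁ i ∈ hgSet h₂ u₂ w₂) (hw : w₁ i ∉ hgSet h₂ u₂ w₂) : False := by
  by_cases hc : i + 3 ≤ h₁
  · exact main_mid_aux hdeg hg₁ hmax₂ hne h₁4 hi1 hc hu hw
  · have h0 : u₁ i = u₁ (h₁ - 1 - 1) := by congr 1; omega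
    have h1 : w₁ i = w₁ (h₁ - 1 - 1) := by congr 1; omega
    exact main_mid_aux hdeg (hg_rev hg₁) hmax₂
      (by rw [hgSet_rev (by omega)]; exact hne) h₁4
      (by omega) (by omega) (h0 ▸ hu) (h1 ▸ hw)

lemma main_cor (hdeg : ∀ v : V, G.degree v ≤ 3)
    {h₁ h₂ : ℕ} {u₁ w₁ u₂ w₂ : ℕ → V}
    (hg₁ : IsHourglass G h₁ u₁ w₁) (hmax₂ : IsMaxHourglass G h₂ u₂ w₂)
    (hne : hgSet h₁ u₁ w₁ ≠ hgSet h₂ u₂ w₂) (h₁4 : 4 ≤ h₁)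
    (hu : u₁ 0 ∈ hgSet h₂ u₂ w₂) (hw : w₁ 0 ∉ hgSet h₂ u₂ w₂) : False := by
  have hg₂ := hmax₂.1
  have hh₂ : 2 ≤ h₂ := hg₂.1
  have hkey : ∀ p q : V, p ≠ q → p ∈ hgSet h₂ u₂ w₂ → q ∈ hgSet h₂ u₂ w₂ →
      G.Adj (u₁ 0) p → G.Adj (u₁ 0) q → p = w₁ 1 ∨ q = w₁ 1 := by
    intro p q hpq hpB hqB hap haq
    by_contra hcon
    push_neg at hcon
    obtain ⟨hp1, hq1⟩ := hcon
    have hp0 : p ≠ w₁ 0 := fun e => hw (e ▸ hpB)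
    rcases three_nbrs hdeg (adj_lay hg₁ (by omega)) (adj_succ hg₁ (by omega)) hap
      (w_ne hg₁ (by omega) (by omega) (by omega)) hp0.symm hp1.symm haq with f | f | f
    · exact hw (f ▸ hqB)
    · exact hq1 f
    · exact hpq.symm f
  have hw1B : w₁ 1 ∈ hgSet h₂ u₂ w₂ := by
    have main : ∀ p q : V, p ≠ q → p ∈ hgSet h₂ u₂ w₂ → q ∈ hgSet h₂ u₂ w₂ →
        G.Adj (u₁ 0) p → G.Adj (u₁ 0) q → w₁ 1 ∈ hgSet h₂ u₂ w₂ := by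
      intro p q d1 d2 d3 d4 d5
      rcases hkey p q d1 d2 d3 d4 d5 with f | f
      · exact f ▸ d2
      · exact f ▸ d3
    obtain ⟨j, hj, e | e⟩ := hu
    · by_cases hj1 : j + 1 < h₂
      · exact main (w₂ j) (w₂ (j + 1)) (w_ne hg₂ hj hj1 (by omega)) (mem_hgSet_w hj)
          (mem_hgSet_w hj1) (by rw [e]; exact adj_lay hg₂ hj)
          (by rw [e]; exact adj_succ hg₂ hj1)
      · have hj2 : 1 ≤ j := by omega
        exact main (w₂ j) (w₂ (j - 1)) (w_ne hg₂ hj (by omega) (by omega)) (mem_hgSet_w hj)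
          (mem_hgSet_w (by omega)) (by rw [e]; exact adj_lay hg₂ hj)
          (by rw [e]; exact adj_pred hg₂ hj2 hj)
    · by_cases hj1 : j + 1 < h₂
      · exact main (u₂ j) (u₂ (j + 1)) (u_ne hg₂ hj hj1 (by omega)) (mem_hgSet_u hj)
          (mem_hgSet_u hj1) (by rw [e]; exact (adj_lay hg₂ hj).symm)
          (by rw [e]; exact (adj_succ' hg₂ hj1).symm)
      · have hj2 : 1 ≤ j := by omega
        refine main (u₂ j) (u₂ (j - 1)) (u_ne hg₂ hj (by omega) (by omega)) (mem_hgSet_u hj)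
          (mem_hgSet_u (by omega)) (by rw [e]; exact (adj_lay hg₂ hj).symm) ?_
        rw [e]
        have hx := adj_succ hg₂ (show (j - 1) + 1 < h₂ by omega)
        rw [show j - 1 + 1 = j from by omega] at hx
        exact hx.symm
  have hu1B : u₁ 1 ∈ hgSet h₂ u₂ w₂ := by
    by_contra hcon
    exact main_mid_aux hdeg (hg_symm hg₁) hmax₂ (by rw [← hgSet_comm]; exact hne) h₁4
      (by omega) (by omega) hw1B hcon
  have hmem1 : ∀ y : V, G.Adj (u₁ 1) y → y ∈ hgSet h₂ u₂ w₂ → y = w₁ 1 ∨ y = w₁ 2 := by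
    intro y hy hyB
    rcases mid_u_nbrs hdeg hg₁ (by omega) (by omega) hy with e | e | e
    · exact absurd (e ▸ hyB) hw
    · exact Or.inl e
    · exact Or.inr e
  obtain ⟨u', w', hg', hBeq, h0⟩ := pos0 hg₂ hu1B (by
    intro a b c ha hb hc haB hbB hcB
    rcases hmem1 a ha haB with rfl | rfl <;> rcases hmem1 b hb hbB with rfl | rfl <;>
      rcases hmem1 c hc hcB with rfl | rfl <;> tauto)
  have hB0 : w' 0 ∈ hgSet h₂ u₂ w₂ := hBeq ▸ mem_hgSet_w (by omega)
  have hB1 : w' 1 ∈ hgSet h₂ u₂ w₂ := hBeq ▸ mem_hgSet_w (by omega)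
  have ha0 : G.Adj (u₁ 1) (w' 0) := by rw [h0]; exact adj_lay hg' (by omega)
  have ha1 : G.Adj (u₁ 1) (w' 1) := by rw [h0]; exact adj_succ hg' (by omega)
  have hD : (w' 0 = w₁ 1 ∧ w' 1 = w₁ 2) ∨ (w' 0 = w₁ 2 ∧ w' 1 = w₁ 1) := by
    have hne01 : w' 0 ≠ w' 1 := w_ne hg' (by omega) (by omega) (by omega)
    rcases hmem1 _ ha0 hB0 with e0 | e0 <;> rcases hmem1 _ ha1 hB1 with e1 | e1
    · exact absurd (e0.trans e1.symm) hne01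
    · exact Or.inl ⟨e0, e1⟩
    · exact Or.inr ⟨e0, e1⟩
    · exact absurd (e0.trans e1.symm) hne01
  have hu0' : u₁ 0 ∈ hgSet h₂ u' w' := by rw [hBeq]; exact hu
  obtain ⟨m, hm, em | em⟩ := hu0'
  · -- u₁ 0 = u' m
    rcases Nat.eq_zero_or_pos m with rfl | hm1
    · exact u_ne hg₁ (by omega) (by omega) (by omega) (em.trans h0.symm)
    · have hp : G.Adj (u₁ 0) (w' (m - 1)) := by rw [em]; exact adj_pred hg' hm1 hm
      have hq : G.Adj (u₁ 0) (w' m) := by rw [em]; exact adj_lay hg' hm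
      have hpq : w' (m - 1) ≠ w' m := w_ne hg' (by omega) hm (by omega)
      have hpB : w' (m - 1) ∈ hgSet h₂ u₂ w₂ := hBeq ▸ mem_hgSet_w (by omega)
      have hqB : w' m ∈ hgSet h₂ u₂ w₂ := hBeq ▸ mem_hgSet_w hm
      rcases hkey _ _ hpq hpB hqB hp hq with f | f
      · -- w' (m-1) = w₁ 1
        rcases hD with ⟨d0, d1⟩ | ⟨d0, d1⟩
        · -- w₁ 1 = w' 0 so m = 1; then u₁ 0 ~ w' 1 = w₁ 2, impossible
          have hm1e : m = 1 := by
            have := hg'.2.2.1 (Set.mem_Iio.mpr (show m - 1 < h₂ by omega))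
              (Set.mem_Iio.mpr (show 0 < h₂ by omega)) (f.trans d0.symm)
            omega
          subst hm1e
          have hx : G.Adj (w₁ 2) (u₁ 0) := by rw [← d1]; exact hq.symm
          rcases mid_w_nbrs hdeg hg₁ (by omega) (by omega) hx with g | g | g <;>
            exact u_ne hg₁ (by omega) (by omega) (by omega) g
        · -- w₁ 1 = w' 1 so m = 2
          have hm2 : m = 2 := by
            have := hg'.2.2.1 (Set.mem_Iio.mpr (show m - 1 < h₂ by omega))
              (Set.mem_Iio.mpr (show 1 < h₂ by omega)) (f.trans d1.symm)
            omega
          subst hm2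
          have hx0 : G.Adj (u' 1) (w₁ 2) := by rw [← d0]; exact adj_succ' hg' (by omega)
          have hx1 : G.Adj (u' 1) (w₁ 1) := by rw [← d1]; exact adj_lay hg' (by omega)
          have hu'1 : u' 1 = u₁ 2 := by
            rcases mid_w_nbrs hdeg hg₁ (by omega) (by omega) hx1.symm with g | g | g
            · exact absurd (g.trans em) (u_ne hg' (by omega) (by omega) (by omega))
            · exact absurd (g.trans h0) (u_ne hg' (by omega) (by omega) (by omega))
            · exact g
          have hy : G.Adj (u₁ 2) (w' 2) := by rw [← hu'1]; exact adj_succ hg' (by omega)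
          have hw2 : w' 2 = w₁ 3 := by
            rcases mid_u_nbrs hdeg hg₁ (by omega) (by omega) hy with g | g | g
            · exact absurd (g.trans d1.symm) (w_ne hg' (by omega) (by omega) (by omega))
            · exact absurd (g.trans d0.symm) (w_ne hg' (by omega) (by omega) (by omega))
            · exact g
          have hadj03 : G.Adj (u₁ 0) (w₁ 3) := by
            rw [em, ← hw2]; exact adj_lay hg' hm
          have hh14 : h₁ = 4 := by
            by_contra hc
            rcases mid_w_nbrs hdeg hg₁ (show 1 ≤ 3 by omega) (show 3 + 1 < h₁ by omega)
              hadj03.symm with g | g | g <;>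
              exact u_ne hg₁ (by omega) (by omega) (by omega) g
          have hNu0 : ∀ x, G.Adj (u₁ 0) x → x = w₁ 0 ∨ x = w₁ 1 ∨ x = w₁ 3 := fun x hx' =>
            three_nbrs hdeg (adj_lay hg₁ (by omega)) (adj_succ hg₁ (by omega)) hadj03
              (w_ne hg₁ (by omega) (by omega) (by omega))
              (w_ne hg₁ (by omega) (by omega) (by omega))
              (w_ne hg₁ (by omega) (by omega) (by omega)) hx'
          have hh23 : h₂ = 3 := by
            by_contra hc
            have ha3 : G.Adj (u₁ 0) (w' 3) := by rw [em]; exact adj_succ hg' (by omega)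
            rcases hNu0 _ ha3 with g | g | g
            · exact hw (by rw [← g]; exact hBeq ▸ mem_hgSet_w (by omega))
            · exact absurd (g.trans d1.symm) (w_ne hg' (by omega) (by omega) (by omega))
            · exact absurd (g.trans hw2.symm) (w_ne hg' (by omega) (by omega) (by omega))
          subst hh23
          have hsub : hgSet 3 u' w' ⊆ hgSet h₁ u₁ w₁ := by
            rintro x ⟨k, hk, rfl | rfl⟩
            · interval_cases k
              · rw [← h0]; exact mem_hgSet_u (by omega)
              · rw [hu'1]; exact mem_hgSet_u (by omega)
              · rw [← em]; exact mem_hgSet_u (by omega)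
            · interval_cases k
              · rw [d0]; exact mem_hgSet_w (by omega)
              · rw [d1]; exact mem_hgSet_w (by omega)
              · rw [hw2]; exact mem_hgSet_w (by omega)
          exact final_contra hg₁ hmax₂ hne (by rw [← hBeq]; exact hsub)
      · -- w' m = w₁ 1
        rcases hD with ⟨d0, d1⟩ | ⟨d0, d1⟩
        · have := hg'.2.2.1 (Set.mem_Iio.mpr hm)
            (Set.mem_Iio.mpr (show 0 < h₂ by omega)) (f.trans d0.symm)
          omega
        · have hm1e : m = 1 := by
            have := hg'.2.2.1 (Set.mem_Iio.mpr hm)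
              (Set.mem_Iio.mpr (show 1 < h₂ by omega)) (f.trans d1.symm)
            omega
          subst hm1e
          have hx : G.Adj (w₁ 2) (u₁ 0) := by rw [← d0]; exact hp.symm
          rcases mid_w_nbrs hdeg hg₁ (by omega) (by omega) hx with g | g | g <;>
            exact u_ne hg₁ (by omega) (by omega) (by omega) g
  · -- u₁ 0 = w' m
    rcases Nat.eq_zero_or_pos m with rfl | hm1
    · rcases hD with ⟨d0, _⟩ | ⟨d0, _⟩ <;>
        exact uw_ne hg₁ (by omega) (by omega) (em.trans d0)
    · have hp : G.Adj (u₁ 0) (u' (m - 1)) := by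
        rw [em]
        have hx := adj_succ hg' (show (m - 1) + 1 < h₂ by omega)
        rw [show m - 1 + 1 = m from by omega] at hx
        exact hx.symm
      have hq : G.Adj (u₁ 0) (u' m) := by rw [em]; exact (adj_lay hg' hm).symm
      have hpq : u' (m - 1) ≠ u' m := u_ne hg' (by omega) hm (by omega)
      have hpB : u' (m - 1) ∈ hgSet h₂ u₂ w₂ := hBeq ▸ mem_hgSet_u (by omega)
      have hqB : u' m ∈ hgSet h₂ u₂ w₂ := hBeq ▸ mem_hgSet_u hm
      rcases hkey _ _ hpq hpB hqB hp hq with f | f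
      · rcases hD with ⟨d0, _⟩ | ⟨_, d1⟩
        · exact uw_ne hg' (by omega) (by omega) (f.trans d0.symm)
        · exact uw_ne hg' (by omega) (by omega) (f.trans d1.symm)
      · rcases hD with ⟨d0, _⟩ | ⟨_, d1⟩
        · exact uw_ne hg' hm (by omega) (f.trans d0.symm)
        · exact uw_ne hg' hm (by omega) (f.trans d1.symm)

end Main


/-- if `H₁` is a maximal hourglass of height at least four in a
graph of maximum degree three and `H₂` is any other maximal hourglass, then for
each layer `i` of `H₁`, `u₁ i ∈ V(H₂) ↔ w₁ i ∈ V(H₂)`. -/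
theorem stmt_14 {V : Type*} [Fintype V] (G : SimpleGraph V) [DecidableRel G.Adj]
    (hdeg : ∀ v : V, G.degree v ≤ 3)
    (h₁ h₂ : ℕ) (u₁ w₁ u₂ w₂ : ℕ → V)
    (hH₁ : IsMaxHourglass G h₁ u₁ w₁) (hH₂ : IsMaxHourglass G h₂ u₂ w₂)
    (hne : hgSet h₁ u₁ w₁ ≠ hgSet h₂ u₂ w₂)
    (h₁4 : 4 ≤ h₁) :
    ∀ i < h₁, (u₁ i ∈ hgSet h₂ u₂ w₂ ↔ w₁ i ∈ hgSet h₂ u₂ w₂) := by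
  intro i hi
  have hg₁ := hH₁.1
  have hg₁s := hg_symm hg₁
  have hnes : hgSet h₁ w₁ u₁ ≠ hgSet h₂ u₂ w₂ := by rw [← hgSet_comm]; exact hne
  constructor
  · intro hmemB
    by_contra hnotB
    rcases Nat.eq_zero_or_pos i with rfl | hip
    · exact (main_cor hdeg hg₁ hH₂ hne h₁4 hmemB hnotB).elim
    · by_cases hmid : i + 1 < h₁
      · exact (main_mid hdeg hg₁ hH₂ hne h₁4 hip hmid hmemB hnotB).elim
      · have h0 : u₁ i = u₁ (h₁ - 1 - 0) := by congr 1; omega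
        have h1 : w₁ i = w₁ (h₁ - 1 - 0) := by congr 1; omega
        exact (main_cor hdeg (hg_rev hg₁) hH₂
          (by rw [hgSet_rev (by omega)]; exact hne) h₁4 (h0 ▸ hmemB) (h1 ▸ hnotB)).elim
  · intro hmemB
    by_contra hnotB
    rcases Nat.eq_zero_or_pos i with rfl | hip
    · exact (main_cor hdeg hg₁s hH₂ hnes h₁4 hmemB hnotB).elim
    · by_cases hmid : i + 1 < h₁
      · exact (main_mid hdeg hg₁s hH₂ hnes h₁4 hip hmid hmemB hnotB).elim
      · have h0 : w₁ i = w₁ (h₁ - 1 - 0) := by congr 1; omega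
        have h1 : u₁ i = u₁ (h₁ - 1 - 0) := by congr 1; omega
        exact (main_cor hdeg (hg_rev hg₁s) hH₂
          (by rw [hgSet_rev (by omega)]; exact hnes) h₁4 (h0 ▸ hmemB) (h1 ▸ hnotB)).elim
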